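/- Let K be an algebraically closed field, let K_♭ ⊆ K be a ♭-section, and let Ω = {(α, 1) : α ∈ K_♭} ∪ {(0,0)} ⊆ K × K. Then every point of K × K is 𝒩-equivalent to exactly one point of Ω. -/

import Mathlib

/-- The step relation generating the partial action of the group `𝒩` on `K × K`. -/
def Rstep {K : Type*} [Field K] (p q : K × K) : Prop :=
  (∃ s : K, s ≠ 0 ∧ q = (s ^ 2 * p.1, s⁻¹ ^ 2 * p.2)) ∨
  (p.2 ≠ 0 ∧ q = (p.2⁻¹ * (1 + p.1 * p.2), -p.2)) ∨
  (p.1 ≠ 0 ∧ q = (-p.1⁻¹, p.1 * (1 + p.1 * p.2))) ∨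
  (1 + p.1 * p.2 ≠ 0 ∧ q = (-p.2 * (1 + p.1 * p.2)⁻¹, -p.1 * (1 + p.1 * p.2)))

/-- A ♭-section of `K`: `0 ∈ S`, for each `α` at least one of `α, -1-α` lies in `S`,
and if both lie in `S` then `α = -1-α`. -/
def IsFlatSection {K : Type*} [Field K] (S : Set K) : Prop :=
  (0 : K) ∈ S ∧ (∀ α : K, α ∈ S ∨ (-1 - α) ∈ S) ∧
    (∀ α : K, α ∈ S → (-1 - α) ∈ S → α = -1 - α)

/-- The invariant: being `(0,0)` and the product up to `t ↦ -1-t`. -/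
def RInv {K : Type*} [Field K] (p q : K × K) : Prop :=
  (p = ((0 : K), (0 : K)) ↔ q = ((0 : K), (0 : K))) ∧
    (p.1 * p.2 = q.1 * q.2 ∨ p.1 * p.2 = -1 - q.1 * q.2)

lemma rInv_equivalence {K : Type*} [Field K] : Equivalence (RInv (K := K)) := by
  constructor
  · intro p; exact ⟨Iff.rfl, Or.inl rfl⟩
  · rintro p q ⟨h1, h2 | h2⟩
    · exact ⟨h1.symm, Or.inl h2.symm⟩
    · exact ⟨h1.symm, Or.inr (by linear_combination h2)⟩
  · rintro p q r ⟨h1, h2⟩ ⟨h3, h4⟩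
    refine ⟨h1.trans h3, ?_⟩
    rcases h2 with h2 | h2 <;> rcases h4 with h4 | h4
    · exact Or.inl (h2.trans h4)
    · exact Or.inr (by linear_combination h2 + h4)
    · exact Or.inr (by linear_combination h2 - h4)
    · exact Or.inl (by linear_combination h2 - h4)

lemma rstep_rInv {K : Type*} [Field K] {p q : K × K} (h : Rstep p q) : RInv p q := by
  obtain ⟨s, hs, rfl⟩ | ⟨h2, rfl⟩ | ⟨h1, rfl⟩ | ⟨hu, rfl⟩ := h
  · constructor
    · simp only [Prod.ext_iff]
      constructor
      · rintro ⟨ha, hb⟩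
        exact ⟨by simp [ha], by simp [hb]⟩
      · rintro ⟨ha, hb⟩
        refine ⟨?_, ?_⟩
        · rcases mul_eq_zero.mp ha with h | h
          · exact absurd h (pow_ne_zero 2 hs)
          · exact h
        · rcases mul_eq_zero.mp hb with h | h
          · exact absurd h (pow_ne_zero 2 (inv_ne_zero hs))
          · exact h
    · left; simp only; field_simp
  · refine ⟨?_, Or.inr (by simp only; field_simp; ring)⟩
    simp only [Prod.ext_iff]
    constructor
    · rintro ⟨ha, hb⟩; exact absurd hb h2
    · rintro ⟨ha, hb⟩
      exact absurd (by simpa using hb) h2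
  · refine ⟨?_, Or.inr (by simp only; field_simp; ring)⟩
    simp only [Prod.ext_iff]
    constructor
    · rintro ⟨ha, hb⟩; exact absurd ha h1
    · rintro ⟨ha, hb⟩
      have : p.1⁻¹ = 0 := by simpa using ha
      exact absurd (inv_eq_zero.mp this) h1
  · refine ⟨?_, Or.inl (by simp only; field_simp)⟩
    simp only [Prod.ext_iff]
    constructor
    · rintro ⟨ha, hb⟩; exact ⟨by simp [hb], by simp [ha]⟩
    · rintro ⟨ha, hb⟩
      have ha' : p.2 * (1 + p.1 * p.2)⁻¹ = 0 := by simpa using ha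
      have hb' : p.1 * (1 + p.1 * p.2) = 0 := by simpa using hb
      refine ⟨?_, ?_⟩
      · rcases mul_eq_zero.mp hb' with h | h
        · exact h
        · exact absurd h hu
      · rcases mul_eq_zero.mp ha' with h | h
        · exact h
        · exact absurd (inv_eq_zero.mp h) hu

lemma eqvGen_rInv {K : Type*} [Field K] {p q : K × K}
    (h : Relation.EqvGen Rstep p q) : RInv p q := by
  induction h with
  | rel _ _ h => exact rstep_rInv h
  | refl _ => exact rInv_equivalence.refl _
  | symm _ _ _ ih => exact rInv_equivalence.symm ih
  | trans _ _ _ _ _ ih1 ih2 => exact rInv_equivalence.trans ih1 ih2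

/-- Step A: rescale second coordinate to 1. -/
lemma stepA {K : Type*} [Field K] [IsAlgClosed K] (p : K × K) (h : p.2 ≠ 0) :
    Rstep p (p.1 * p.2, 1) := by
  obtain ⟨s, hs⟩ := IsAlgClosed.exists_pow_nat_eq (p.2) (n := 2) (by norm_num)
  have hs0 : s ≠ 0 := by rintro rfl; rw [← hs] at h; simp at h
  refine Or.inl ⟨s, hs0, ?_⟩
  rw [Prod.ext_iff]
  refine ⟨by simp [hs, mul_comm], ?_⟩
  simp only
  rw [inv_pow, hs, inv_mul_cancel₀ h]

lemma eqv_prod {K : Type*} [Field K] [IsAlgClosed K] (p : K × K)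
    (hp : p ≠ ((0 : K), (0 : K))) :
    Relation.EqvGen Rstep p (p.1 * p.2, 1) := by
  by_cases h2 : p.2 = 0
  · have h1 : p.1 ≠ 0 := by
      intro h; exact hp (Prod.ext_iff.mpr ⟨h, h2⟩)
    have s1 : Rstep p (-p.1⁻¹, p.1 * (1 + p.1 * p.2)) := Or.inr (Or.inr (Or.inl ⟨h1, rfl⟩))
    have e1 : ((-p.1⁻¹, p.1 * (1 + p.1 * p.2)) : K × K) = (-p.1⁻¹, p.1) := by
      simp [h2]
    rw [e1] at s1
    have s2 : Rstep ((-p.1⁻¹, p.1) : K × K) ((-1 : K), (1 : K)) := by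
      have := stepA ((-p.1⁻¹, p.1) : K × K) h1
      simpa [h1] using this
    have s3 : Rstep ((-1 : K), (1 : K)) ((0 : K), (-1 : K)) := by
      refine Or.inr (Or.inl ⟨one_ne_zero, ?_⟩)
      norm_num
    have s4 : Rstep ((0 : K), (-1 : K)) ((0 : K), (1 : K)) := by
      have := stepA ((0 : K), (-1 : K)) (by norm_num)
      simpa using this
    have e0 : p.1 * p.2 = 0 := by rw [h2, mul_zero]
    rw [e0]
    exact .trans _ _ _ (.trans _ _ _ (.trans _ _ _ (.rel _ _ s1) (.rel _ _ s2))
      (.rel _ _ s3)) (.rel _ _ s4)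
  · exact .rel _ _ (stepA p h2)

/-- `(t,1) ~ (-1-t, 1)`. -/
lemma eqv_flip {K : Type*} [Field K] [IsAlgClosed K] (t : K) :
    Relation.EqvGen Rstep ((t, 1) : K × K) ((-1 - t, 1) : K × K) := by
  have s1 : Rstep ((t, 1) : K × K) ((1 + t, -1) : K × K) := by
    refine Or.inr (Or.inl ⟨one_ne_zero, ?_⟩)
    norm_num
  have s2 : Rstep ((1 + t, -1) : K × K) ((-1 - t, 1) : K × K) := by
    have := stepA ((1 + t, -1) : K × K) (by norm_num)
    have e : (((1 + t : K), (-1 : K)).1 * ((1 + t : K), (-1 : K)).2, (1 : K)) =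
        ((-1 - t, 1) : K × K) := by
      simp only [Prod.mk.injEq]
      exact ⟨by ring, trivial⟩
    rwa [e] at this
  exact .trans _ _ _ (.rel _ _ s1) (.rel _ _ s2)

theorem flatSection_reps {K : Type*} [Field K] [IsAlgClosed K]
    (S : Set K) (hS : IsFlatSection S) (p : K × K) :
    ∃! q : K × K,
      q ∈ ((fun α : K => ((α, 1) : K × K)) '' S ∪ {((0 : K), (0 : K))}) ∧
        Relation.EqvGen Rstep p q := by
  obtain ⟨hS0, hStot, hSuniq⟩ := hS
  -- uniqueness helper on the section
  have sec_uniq : ∀ α β t : K, (α = t ∨ α = -1 - t) → (β = t ∨ β = -1 - t) →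
      α ∈ S → β ∈ S → α = β := by
    intro α β t hαt hβt hα hβ
    rcases hαt with h1 | h1 <;> rcases hβt with h2 | h2
    · rw [h1, h2]
    · rw [h1] at hα ⊢; rw [h2] at hβ ⊢; exact hSuniq t hα hβ
    · rw [h1] at hα ⊢; rw [h2] at hβ ⊢; exact (hSuniq t hβ hα).symm
    · rw [h1, h2]
  by_cases hp : p = ((0 : K), (0 : K))
  · refine ⟨((0 : K), (0 : K)), ⟨Or.inr rfl, hp ▸ Relation.EqvGen.refl _⟩, ?_⟩
    rintro q ⟨hqmem, hqe⟩
    exact (eqvGen_rInv hqe).1.mp hp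
  · set t := p.1 * p.2 with ht
    have hmain : Relation.EqvGen Rstep p ((t, 1) : K × K) := eqv_prod p hp
    obtain ⟨α, hαS, hαt⟩ : ∃ α : K, α ∈ S ∧ (α = t ∨ α = -1 - t) := by
      rcases hStot t with h | h
      · exact ⟨t, h, Or.inl rfl⟩
      · exact ⟨-1 - t, h, Or.inr rfl⟩
    have hchain : Relation.EqvGen Rstep p ((α, 1) : K × K) := by
      rcases hαt with rfl | rfl
      · exact hmain
      · exact .trans _ _ _ hmain (eqv_flip t)
    refine ⟨((α, 1) : K × K), ⟨Or.inl ⟨α, hαS, rfl⟩, hchain⟩, ?_⟩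
    rintro q ⟨hqmem, hqe⟩
    have hinv := eqvGen_rInv hqe
    have hq0 : q ≠ ((0 : K), (0 : K)) := fun h => hp (hinv.1.mpr h)
    rcases hqmem with ⟨β, hβS, rfl⟩ | h
    · have hβt : β = t ∨ β = -1 - t := by
        rcases hinv.2 with h | h
        · exact Or.inl (by simpa using h.symm)
        · exact Or.inr (by simp only [mul_one] at h; linear_combination h)
      have := sec_uniq β α t hβt hαt hβS hαS
      simp [this]
    · exact absurd h hq0
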